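/- For every linear form L ∈ ℂ[x₀, x₁, x₂, x₃]₁ and every homogeneous cubic form F ∈ ℂ[x₀, x₁, x₂, x₃]₃, the quartic L·F satisfies dim H_{∂²(L·F)} ≤ 9; equivalently, the 10×10 middle catalecticant matrix of L·F (the matrix of the linear map sending degree-2 differential operators to the corresponding second-order partial derivatives of L·F) has vanishing determinant. -/

import Mathlib

open MvPolynomial

/-- Iterated partial derivative of a polynomial along a list of variables. -/
noncomputable def derivList {σ : Type*} (l : List σ) (F : MvPolynomial σ ℂ) :
    MvPolynomial σ ℂ :=
  l.foldl (fun G i => MvPolynomial.pderiv i G) F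

/-- `Hspan s F` is the linear span of all `s`-th order partial derivatives of `F`. -/
noncomputable def Hspan {σ : Type*} (s : ℕ) (F : MvPolynomial σ ℂ) :
    Submodule ℂ (MvPolynomial σ ℂ) :=
  Submodule.span ℂ {P | ∃ l : List σ, l.length = s ∧ P = derivList l F}

lemma aux_degree_sub_single {σ : Type*} {d : σ →₀ ℕ} {i : σ} {n : ℕ}
    (hd : Finsupp.degree d = n + 1) (hi : d i ≠ 0) :
    Finsupp.degree (d - Finsupp.single i 1) = n := by
  classical
  have h1 : Finsupp.single i 1 ≤ d := by
    rw [Finsupp.single_le_iff]; omega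
  have h2 : (d - Finsupp.single i 1) + Finsupp.single i 1 = d := tsub_add_cancel_of_le h1
  have hadd : ∀ a b : σ →₀ ℕ, Finsupp.degree (a + b) = Finsupp.degree a + Finsupp.degree b := by
    intro a b
    simp [Finsupp.degree_eq_weight_one, map_add]
  have hsingle : Finsupp.degree (Finsupp.single i 1) = 1 := by
    exact Finsupp.degree_single i 1
  have := hadd (d - Finsupp.single i 1) (Finsupp.single i 1)
  rw [h2, hd, hsingle] at this
  omega

lemma aux_pderiv_homog {σ : Type*} {p : MvPolynomial σ ℂ} {n : ℕ}
    (hp : p.IsHomogeneous (n + 1)) (i : σ) : (MvPolynomial.pderiv i p).IsHomogeneous n := by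
  classical
  rw [← p.support_sum_monomial_coeff, map_sum]
  apply MvPolynomial.IsHomogeneous.sum
  intro d hd
  rw [pderiv_monomial]
  by_cases h : d i = 0
  · simp [h, isHomogeneous_zero]
  · apply isHomogeneous_monomial
    have hdeg : Finsupp.degree d = n + 1 := by
      have := hp (MvPolynomial.mem_support_iff.mp hd)
      simpa [Finsupp.degree_eq_weight_one, Pi.one_def] using this
    exact aux_degree_sub_single hdeg h

lemma aux_pderiv_homog0 {σ : Type*} {p : MvPolynomial σ ℂ}
    (hp : p.IsHomogeneous 0) (j : σ) : MvPolynomial.pderiv j p = 0 := by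
  classical
  rw [← p.support_sum_monomial_coeff, map_sum]
  apply Finset.sum_eq_zero
  intro d hd
  have hdeg : Finsupp.degree d = 0 := by
    have := hp (MvPolynomial.mem_support_iff.mp hd)
    simpa [Finsupp.degree_eq_weight_one, Pi.one_def] using this
  have hd0 : d = 0 := (Finsupp.degree_eq_zero_iff d).mp hdeg
  simp [hd0, pderiv_monomial]

lemma aux_single_of_degree_one {σ : Type*} {d : σ →₀ ℕ} (hd : Finsupp.degree d = 1) :
    ∃ k, d = Finsupp.single k 1 := by
  classical
  have hne : d ≠ 0 := by
    intro h; rw [h] at hd; simp at hd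
  obtain ⟨k, hk⟩ : ∃ k, d k ≠ 0 := by
    by_contra h; push_neg at h
    exact hne (Finsupp.ext fun i => h i)
  refine ⟨k, ?_⟩
  have hk1 : d k = 1 :=
    le_antisymm (hd ▸ Finsupp.le_degree k d) (Nat.one_le_iff_ne_zero.mpr hk)
  ext j
  rcases eq_or_ne j k with rfl | hj
  · simp [hk1]
  · have hj0 : d j = 0 := by
      by_contra hj0
      have hsub : ({j, k} : Finset σ) ⊆ d.support := by
        intro x hx
        simp only [Finset.mem_insert, Finset.mem_singleton] at hx
        rcases hx with rfl | rfl <;> simp [Finsupp.mem_support_iff, hj0, hk]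
      have hle : d j + d k ≤ Finsupp.degree d := by
        have := Finset.sum_le_sum_of_subset (f := fun x => d x) hsub
        rwa [Finset.sum_pair hj] at this
      omega
    simp [hj0, Finsupp.single_apply, (Ne.symm hj)]

lemma aux_homog_one_mem_span {σ : Type*} {p : MvPolynomial σ ℂ} (hp : p.IsHomogeneous 1) :
    p ∈ Submodule.span ℂ (Set.range (X : σ → MvPolynomial σ ℂ)) := by
  classical
  rw [← p.support_sum_monomial_coeff]
  apply Submodule.sum_mem
  intro d hd
  have hdeg : Finsupp.degree d = 1 := by
    have := hp (MvPolynomial.mem_support_iff.mp hd)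
    simpa [Finsupp.degree_eq_weight_one, Pi.one_def] using this
  obtain ⟨k, rfl⟩ := aux_single_of_degree_one hdeg
  have : (monomial (Finsupp.single k 1)) (coeff (Finsupp.single k 1) p)
      = (coeff (Finsupp.single k 1) p) • (X k : MvPolynomial σ ℂ) := by
    rw [X, smul_monomial, smul_eq_mul, mul_one]
  rw [this]
  exact Submodule.smul_mem _ _ (Submodule.subset_span ⟨k, rfl⟩)

/-- For every linear form `L` and cubic form `F` in
`ℂ[x₀,x₁,x₂,x₃]`, the quartic `L·F` satisfies `dim H_{∂²(L·F)} ≤ 9`, i.e. its 10×10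
middle catalecticant matrix is singular. -/
theorem osculating_in_secant_n3 (L F : MvPolynomial (Fin 4) ℂ)
    (hL : L.IsHomogeneous 1) (hF : F.IsHomogeneous 3) :
    Module.finrank ℂ (Hspan 2 (L * F)) ≤ 9 := by
  classical
  set v : Fin 4 ⊕ Fin 4 → MvPolynomial (Fin 4) ℂ :=
    Sum.elim (fun j => MvPolynomial.pderiv j F) (fun k => L * X k) with hv
  have hsub : Hspan 2 (L * F) ≤ Submodule.span ℂ (Set.range v) := by
    rw [Hspan, Submodule.span_le]
    rintro P ⟨l, hl, rfl⟩
    obtain ⟨i, j, rfl⟩ : ∃ i j, l = [i, j] := by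
      match l, hl with
      | [i, j], _ => exact ⟨i, j, rfl⟩
    have hder : derivList [i, j] (L * F)
        = MvPolynomial.pderiv j (MvPolynomial.pderiv i (L * F)) := rfl
    have hexp : derivList [i, j] (L * F)
        = MvPolynomial.pderiv i L * MvPolynomial.pderiv j F
          + MvPolynomial.pderiv j L * MvPolynomial.pderiv i F
          + L * MvPolynomial.pderiv j (MvPolynomial.pderiv i F) := by
      rw [hder, pderiv_mul, map_add, pderiv_mul, pderiv_mul,
        aux_pderiv_homog0 (by simpa using aux_pderiv_homog hL i) j]
      ring
    have hA : (MvPolynomial.pderiv i L).IsHomogeneous 0 := by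
      simpa using aux_pderiv_homog hL i
    have hB : (MvPolynomial.pderiv j L).IsHomogeneous 0 := by
      simpa using aux_pderiv_homog hL j
    have hmemA : MvPolynomial.pderiv i L * MvPolynomial.pderiv j F
        ∈ Submodule.span ℂ (Set.range v) := by
      obtain ⟨a, ha⟩ : ∃ a, MvPolynomial.pderiv i L = C a := by
        refine ⟨coeff 0 (MvPolynomial.pderiv i L), ?_⟩
        ext d
        rcases eq_or_ne d 0 with rfl | hd
        · simp
        · have : coeff d (MvPolynomial.pderiv i L) = 0 := by
            by_contra hc
            have hdeg : Finsupp.degree d = 0 := by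
              have := hA hc
              simpa [Finsupp.degree_eq_weight_one, Pi.one_def] using this
            exact hd ((Finsupp.degree_eq_zero_iff d).mp hdeg)
          rw [this, coeff_C, if_neg (Ne.symm hd)]
      rw [ha, C_mul']
      exact Submodule.smul_mem _ _
        (Submodule.subset_span ⟨Sum.inl j, rfl⟩)
    have hmemB : MvPolynomial.pderiv j L * MvPolynomial.pderiv i F
        ∈ Submodule.span ℂ (Set.range v) := by
      obtain ⟨a, ha⟩ : ∃ a, MvPolynomial.pderiv j L = C a := by
        refine ⟨coeff 0 (MvPolynomial.pderiv j L), ?_⟩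
        ext d
        rcases eq_or_ne d 0 with rfl | hd
        · simp
        · have : coeff d (MvPolynomial.pderiv j L) = 0 := by
            by_contra hc
            have hdeg : Finsupp.degree d = 0 := by
              have := hB hc
              simpa [Finsupp.degree_eq_weight_one, Pi.one_def] using this
            exact hd ((Finsupp.degree_eq_zero_iff d).mp hdeg)
          rw [this, coeff_C, if_neg (Ne.symm hd)]
      rw [ha, C_mul']
      exact Submodule.smul_mem _ _
        (Submodule.subset_span ⟨Sum.inl i, rfl⟩)
    have hmemC : L * MvPolynomial.pderiv j (MvPolynomial.pderiv i F)
        ∈ Submodule.span ℂ (Set.range v) := by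
      have hG : (MvPolynomial.pderiv j (MvPolynomial.pderiv i F)).IsHomogeneous 1 := by
        have h2 : (MvPolynomial.pderiv i F).IsHomogeneous 2 :=
          aux_pderiv_homog (by simpa using hF) i
        exact aux_pderiv_homog (by simpa using h2) j
      have hGmem := aux_homog_one_mem_span hG
      have hmap : Submodule.map (LinearMap.mulLeft ℂ L)
          (Submodule.span ℂ (Set.range (X : Fin 4 → MvPolynomial (Fin 4) ℂ)))
          ≤ Submodule.span ℂ (Set.range v) := by
        rw [Submodule.map_span, Submodule.span_le]
        rintro Q ⟨R, ⟨k, rfl⟩, rfl⟩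
        exact Submodule.subset_span ⟨Sum.inr k, rfl⟩
      exact hmap ⟨_, hGmem, rfl⟩
    have hfin : derivList [i, j] (L * F) ∈ Submodule.span ℂ (Set.range v) := by
      rw [hexp]
      exact add_mem (add_mem hmemA hmemB) hmemC
    exact hfin
  have hfd : FiniteDimensional ℂ (Submodule.span ℂ (Set.range v)) :=
    FiniteDimensional.span_of_finite ℂ (Set.finite_range v)
  have h1 : Module.finrank ℂ (Hspan 2 (L * F))
      ≤ Module.finrank ℂ (Submodule.span ℂ (Set.range v)) :=
    Submodule.finrank_mono hsub
  have h2 : Module.finrank ℂ (Submodule.span ℂ (Set.range v)) ≤ 8 := by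
    have := finrank_span_le_card (R := ℂ) (Set.range v)
    refine le_trans this ?_
    have : (Set.range v).toFinset.card ≤ Fintype.card (Fin 4 ⊕ Fin 4) := by
      rw [Set.toFinset_card]
      exact Fintype.card_range_le v
    simpa using this
  omega
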